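/- Let k be a field, A a finitely generated k-algebra that is an integral domain and is integrally closed in its fraction field, G a group acting on A by k-algebra automorphisms, and B = A^G the subalgebra of G-invariant elements. Then B is a Krull ring: inside the fraction field of B, B equals the intersection of the localizations B_p, where p ranges over all prime ideals of B of height 1. -/

import Mathlib

section Key

variable {A B : Type*} [CommRing A] [IsDomain A] [IsIntegrallyClosed A] [IsNoetherianRing A]
  [CommRing B]

theorem nagata_key (f : B →+* A) (hf : Function.Injective f)
    (hex : ∀ u w : B, (∃ α : A, f u = f w * α) → ∃ t : B, u = w * t)
    (a b : B) (hb : b ≠ 0) (ha : ∀ t : B, a ≠ b * t) :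
    ∃ (𝔭 : Ideal B) (h𝔭 : 𝔭.IsPrime),
      (∀ s t : B, s * a = b * t → s ∈ 𝔭) ∧
      Order.height (⟨𝔭, h𝔭⟩ : PrimeSpectrum B) = 1 := by
  haveI : IsDomain B := hf.isDomain f
  -- the set of conductors
  set sb : Ideal A := Ideal.span {f b} with hsb
  have hfb0 : f b ≠ 0 := fun h => hb (hf (by rw [h, map_zero]))
  -- membership transfer
  have hmem : ∀ u : B, f u ∈ sb → ∃ t : B, u = b * t := by
    intro u hu
    rw [hsb, Ideal.mem_span_singleton] at hu
    exact hex u b hu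
  have hmem' : ∀ (u t : B), u = b * t → f u ∈ sb := by
    intro u t hu
    rw [hsb, Ideal.mem_span_singleton, hu, map_mul]
    exact Dvd.intro _ rfl
  -- maximal conductor
  set S : Set (Ideal A) := {I | ∃ t : B, (∀ d : B, t * a ≠ b * d) ∧
      I = sb.colon (Ideal.span {f (t * a)})} with hS
  have hSne : S.Nonempty := ⟨sb.colon (Ideal.span {f (1 * a)}), 1, by simpa using ha, rfl⟩
  obtain ⟨P, hPS, hPmax⟩ := (set_has_maximal_iff_noetherian.mpr inferInstance) S hSne
  obtain ⟨t₀, ht₀, hPdef⟩ := hPS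
  set c : B := t₀ * a with hc
  have hcb : ∀ d : B, c ≠ b * d := ht₀
  -- the prime 𝔭
  set 𝔭 : Ideal B := Ideal.comap f P with h𝔭def
  have hmemP : ∀ r : A, r ∈ P ↔ r * f c ∈ sb := by
    intro r; rw [hPdef, Ideal.mem_colon_span_singleton]
  have hmem𝔭 : ∀ r : B, r ∈ 𝔭 ↔ ∃ w : B, r * c = b * w := by
    intro r
    constructor
    · intro hr
      have : f r * f c ∈ sb := (hmemP (f r)).mp (Ideal.mem_comap.mp hr)
      rw [← map_mul] at this
      exact hmem _ this
    · rintro ⟨w, hw⟩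
      have : f (r * c) ∈ sb := hmem' _ w hw
      rw [map_mul] at this
      exact Ideal.mem_comap.mpr ((hmemP (f r)).mpr this)
  -- primality
  have h𝔭prime : 𝔭.IsPrime := by
    constructor
    · intro htop
      have h1 : (1 : B) ∈ 𝔭 := htop ▸ Submodule.mem_top
      obtain ⟨w, hw⟩ := (hmem𝔭 1).mp h1
      rw [one_mul] at hw
      exact hcb w hw
    · intro r s hrs
      by_contra hcon
      push_neg at hcon
      obtain ⟨hr, hs⟩ := hcon
      -- s * c is another admissible conductor source
      have hscne : ∀ d : B, (s * t₀) * a ≠ b * d := by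
        intro d hd
        exact hs ((hmem𝔭 s).mpr ⟨d, by rw [← hd, hc]; ring⟩)
      set J : Ideal A := sb.colon (Ideal.span {f ((s * t₀) * a)}) with hJ
      have hJS : J ∈ S := ⟨s * t₀, hscne, rfl⟩
      have hPJ : P ≤ J := by
        intro u hu
        rw [hJ, Ideal.mem_colon_span_singleton]
        have hsc : (s * t₀) * a = s * c := by rw [hc]; ring
        have : u * f c ∈ sb := (hmemP u).mp hu
        rw [hsc, map_mul, show u * (f s * f c) = f s * (u * f c) by ring]
        exact Ideal.mul_mem_left _ _ this
      have hJP : J = P := by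
        by_contra hne
        exact hPmax J hJS (lt_of_le_of_ne hPJ (Ne.symm hne))
      -- now conclude r ∈ 𝔭
      apply hr
      apply Ideal.mem_comap.mpr
      apply (hmemP (f r)).mpr
      have hrsP : f (r * s) ∈ P := Ideal.mem_comap.mp hrs
      have : f (r * s) * f c ∈ sb := (hmemP _).mp hrsP
      have hfr : f r ∈ J := by
        rw [hJ, Ideal.mem_colon_span_singleton]
        have hsc : (s * t₀) * a = s * c := by rw [hc]; ring
        rw [hsc, map_mul, show f r * (f s * f c) = f (r * s) * f c by rw [map_mul f r s]; ring]
        exact this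
      rw [hJP] at hfr
      exact (hmemP (f r)).mp hfr
  -- conductor condition
  have hcond : ∀ s t : B, s * a = b * t → s ∈ 𝔭 := by
    intro s t hst
    apply (hmem𝔭 s).mpr
    exact ⟨t₀ * t, by rw [hc]; calc s * (t₀ * a) = t₀ * (s * a) := by ring
      _ = t₀ * (b * t) := by rw [hst]
      _ = b * (t₀ * t) := by ring⟩
  have hb𝔭 : b ∈ 𝔭 := (hmem𝔭 b).mpr ⟨c, by ring⟩
  have h𝔭ne : 𝔭 ≠ ⊥ := fun h => hb (by rw [h] at hb𝔭; exact hb𝔭)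
  have h1n𝔭 : (1 : B) ∉ 𝔭 := fun h => h𝔭prime.ne_top ((Ideal.eq_top_iff_one _).mpr h)
  -- no intermediate primes
  have NoMid : ∀ p' : Ideal B, p'.IsPrime → p' < 𝔭 → p' = ⊥ := by
    intro p' hp' hlt
    by_contra hp'ne
    obtain ⟨z, hzp', hz0⟩ := Submodule.exists_mem_ne_zero_of_ne_bot hp'ne
    have hz𝔭 : z ∈ 𝔭 := hlt.le hzp'
    -- key sequence: ∀ n, ∃ s ∉ 𝔭, w, s * z * c ^ n = b ^ n * w
    have C1 : ∀ n : ℕ, ∃ s w : B, s ∉ 𝔭 ∧ s * z * c ^ n = b ^ n * w := by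
      by_cases D : ∀ r ∈ 𝔭, ∀ w : B, r * c = b * w → ∃ σ : B, σ ∉ 𝔭 ∧ σ * w ∈ 𝔭
      · -- case I
        have C1' : ∀ n : ℕ, ∃ s w : B, s ∉ 𝔭 ∧ w ∈ 𝔭 ∧ s * z * c ^ n = b ^ n * w := by
          intro n
          induction n with
          | zero => exact ⟨1, z, h1n𝔭, hz𝔭, by ring⟩
          | succ n ih =>
            obtain ⟨s, w, hs, hw𝔭, heq⟩ := ih
            obtain ⟨w₁, hw₁⟩ := (hmem𝔭 w).mp hw𝔭
            obtain ⟨σ, hσ, hσw₁⟩ := D w hw𝔭 w₁ hw₁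
            refine ⟨s * σ, σ * w₁, fun hmem => ?_, hσw₁, ?_⟩
            · rcases h𝔭prime.mem_or_mem hmem with h | h
              exacts [hs h, hσ h]
            · calc (s * σ) * z * c ^ (n + 1) = σ * ((s * z * c ^ n) * c) := by ring
              _ = σ * ((b ^ n * w) * c) := by rw [heq]
              _ = b ^ n * (σ * (w * c)) := by ring
              _ = b ^ n * (σ * (b * w₁)) := by rw [hw₁]
              _ = b ^ (n + 1) * (σ * w₁) := by ring
        intro n; obtain ⟨s, w, hs, _, heq⟩ := C1' n; exact ⟨s, w, hs, heq⟩
      · -- case II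
        push_neg at D
        obtain ⟨r₀, hr₀𝔭, w₀, hr₀c, hw₀all⟩ := D
        have hw₀n𝔭 : w₀ ∉ 𝔭 := by
          have := hw₀all 1 h1n𝔭
          rwa [one_mul] at this
        -- r₀ ∉ p'
        have hr₀np' : r₀ ∉ p' := by
          intro hr₀p'
          obtain ⟨ρ, hρ𝔭, hρnp'⟩ := SetLike.exists_of_lt hlt
          obtain ⟨ρ₁, hρ₁⟩ := (hmem𝔭 ρ).mp hρ𝔭
          have key : ρ * w₀ = r₀ * ρ₁ := by
            apply mul_left_cancel₀ hb
            calc b * (ρ * w₀) = ρ * (b * w₀) := by ring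
            _ = ρ * (r₀ * c) := by rw [hr₀c]
            _ = r₀ * (ρ * c) := by ring
            _ = r₀ * (b * ρ₁) := by rw [hρ₁]
            _ = b * (r₀ * ρ₁) := by ring
          have : ρ * w₀ ∈ p' := key ▸ Ideal.mul_mem_right _ _ hr₀p'
          rcases hp'.mem_or_mem this with h | h
          · exact hρnp' h
          · exact hw₀n𝔭 (hlt.le h)
        have C1'' : ∀ n : ℕ, ∃ σ : B, σ ∈ p' ∧ z * c ^ n = b ^ n * σ := by
          intro n
          induction n with
          | zero => exact ⟨z, hzp', by ring⟩
          | succ n ih =>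
            obtain ⟨σ, hσp', heq⟩ := ih
            obtain ⟨σ₁, hσ₁⟩ := (hmem𝔭 σ).mp (hlt.le hσp')
            have key : r₀ * σ₁ = σ * w₀ := by
              apply mul_left_cancel₀ hb
              calc b * (r₀ * σ₁) = r₀ * (b * σ₁) := by ring
              _ = r₀ * (σ * c) := by rw [hσ₁]
              _ = σ * (r₀ * c) := by ring
              _ = σ * (b * w₀) := by rw [hr₀c]
              _ = b * (σ * w₀) := by ring
            have hσ₁p' : σ₁ ∈ p' := by
              have hmemp' : r₀ * σ₁ ∈ p' := key ▸ Ideal.mul_mem_right _ _ hσp'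
              rcases hp'.mem_or_mem hmemp' with h | h
              · exact absurd h hr₀np'
              · exact h
            refine ⟨σ₁, hσ₁p', ?_⟩
            calc z * c ^ (n + 1) = (z * c ^ n) * c := by ring
            _ = (b ^ n * σ) * c := by rw [heq]
            _ = b ^ n * (σ * c) := by ring
            _ = b ^ n * (b * σ₁) := by rw [hσ₁]
            _ = b ^ (n + 1) * σ₁ := by ring
        intro n; obtain ⟨σ, _, heq⟩ := C1'' n
        exact ⟨1, σ, h1n𝔭, by rw [one_mul]; exact heq⟩
    -- Step 5: contradiction via localization of A
    haveI := h𝔭prime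
    set S₀ : Submonoid A := Submonoid.map (f : B →* A) 𝔭.primeCompl with hS₀
    have hdisj : Disjoint (P : Set A) (S₀ : Set A) := by
      rw [Set.disjoint_left]
      rintro α hαP ⟨s, hs, rfl⟩
      exact hs (Ideal.mem_comap.mpr hαP)
    obtain ⟨q, hq, hPq, hqdisj⟩ := Ideal.exists_le_prime_disjoint P S₀ hdisj
    haveI := hq
    have hq𝔭 : ∀ s : B, s ∉ 𝔭 → f s ∈ q.primeCompl := by
      intro s hs hsq
      exact Set.disjoint_left.mp hqdisj hsq ⟨s, hs, rfl⟩
    set R := Localization.AtPrime q with hR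
    set K := FractionRing A with hK
    set jA : A →+* K := algebraMap A K with hjA
    have hjAinj : Function.Injective jA := IsFractionRing.injective A K
    have hjA0 : ∀ u : A, u ≠ 0 → jA u ≠ 0 := by
      intro u hu h
      exact hu (hjAinj (by rw [h, map_zero]))
    have hunits : ∀ m : q.primeCompl, IsUnit (jA m) := by
      intro m
      have hm0 : (m : A) ≠ 0 := fun h => m.2 (h ▸ q.zero_mem)
      exact isUnit_iff_ne_zero.mpr (hjA0 _ hm0)
    set φ : R →+* K := IsLocalization.lift (S := R) hunits with hφ
    letI : Algebra R K := φ.toAlgebra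
    haveI : IsScalarTower A R K := IsScalarTower.of_algebraMap_eq fun u => by
      rw [RingHom.algebraMap_toAlgebra, hφ, IsLocalization.lift_eq]
    haveI : IsNoetherianRing R := IsLocalization.isNoetherianRing q.primeCompl R inferInstance
    have htower : ∀ u : A, algebraMap R K (algebraMap A R u) = jA u := fun u =>
      (IsScalarTower.algebraMap_apply A R K u).symm
    -- basic nonvanishing
    have hfc0 : jA (f b) ≠ 0 := hjA0 _ hfb0
    have hz0A : f z ≠ 0 := fun h => hz0 (hf (by rw [h, map_zero]))
    have hjz0 : jA (f z) ≠ 0 := hjA0 _ hz0A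
    set y : K := jA (f c) / jA (f b) with hy
    -- powers land in R
    have hyn : ∀ n : ℕ, ∃ r : R, jA (f z) * y ^ n = algebraMap R K r := by
      intro n
      obtain ⟨s, w, hs, heq⟩ := C1 n
      have hs0 : f s ≠ 0 := fun h => (hq𝔭 s hs) (h ▸ q.zero_mem)
      have hjs0 : jA (f s) ≠ 0 := hjA0 _ hs0
      refine ⟨IsLocalization.mk' R (f w) ⟨f s, hq𝔭 s hs⟩, ?_⟩
      have hspec : algebraMap R K (IsLocalization.mk' R (f w) ⟨f s, hq𝔭 s hs⟩) * jA (f s)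
          = jA (f w) := by
        have := congrArg (algebraMap R K) (IsLocalization.mk'_spec R (f w) ⟨f s, hq𝔭 s hs⟩)
        rwa [map_mul, htower, htower] at this
      have heqK : jA (f s) * jA (f z) * jA (f c) ^ n = jA (f b) ^ n * jA (f w) := by
        have := congrArg jA (congrArg f heq)
        simpa [map_mul, map_pow] using this
      apply mul_right_cancel₀ hjs0
      rw [hspec, hy, div_pow]
      rw [div_eq_mul_inv]
      calc _ = (jA (f s) * jA (f z) * jA (f c) ^ n) * (jA (f b) ^ n)⁻¹ := by ring
        _ = jA (f w) := by
          rw [heqK, mul_comm, ← mul_assoc, inv_mul_cancel₀ (pow_ne_zero n hfc0), one_mul]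
    -- y is integral over R
    have hyint : IsIntegral R y := by
      set Mod : Submodule R K := Submodule.span R {(jA (f z))⁻¹} with hMod
      have hadj : Subalgebra.toSubmodule (Algebra.adjoin R {y}) ≤ Mod := by
        rw [Algebra.adjoin_eq_span]
        apply Submodule.span_le.mpr
        rintro u hu
        obtain ⟨n, rfl⟩ := Submonoid.mem_closure_singleton.mp hu
        obtain ⟨r, hr⟩ := hyn n
        apply Submodule.mem_span_singleton.mpr
        refine ⟨r, ?_⟩
        rw [Algebra.smul_def, ← hr]
        rw [mul_right_comm, mul_inv_cancel₀ hjz0, one_mul]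
      haveI : IsNoetherian R Mod :=
        isNoetherian_of_fg_of_noetherian Mod (Submodule.fg_span_singleton _)
      have hNeq : Subalgebra.toSubmodule (Algebra.adjoin R {y}) =
          Submodule.map Mod.subtype
            (Submodule.comap Mod.subtype (Subalgebra.toSubmodule (Algebra.adjoin R {y}))) := by
        rw [Submodule.map_comap_subtype, inf_eq_right.mpr hadj]
      have hfg : (Subalgebra.toSubmodule (Algebra.adjoin R {y})).FG := by
        rw [hNeq]
        exact (IsNoetherian.noetherian _).map _
      exact IsIntegral.of_mem_of_fg _ hfg y (Algebra.self_mem_adjoin_singleton R y)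
    obtain ⟨m, hm⟩ := hyint.exists_multiple_integral_of_isLocalization (M := q.primeCompl)
    obtain ⟨α, hα⟩ := IsIntegrallyClosed.isIntegral_iff.mp hm
    have hαy : jA α = jA (m : A) * y := by
      rw [hjA, hα, Submonoid.smul_def, Algebra.smul_def]
    have hmain : α * f b = (m : A) * f c := by
      apply hjAinj
      rw [map_mul, map_mul, hαy, hy]
      rw [mul_assoc, div_mul_cancel₀ _ hfc0]
    have hmP : (m : A) ∈ P := by
      apply (hmemP _).mpr
      rw [hsb, ← hmain]
      exact Ideal.mem_span_singleton'.mpr ⟨α, rfl⟩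
    exact m.2 (hPq hmP)
  refine ⟨𝔭, h𝔭prime, hcond, ?_⟩
  apply le_antisymm
  · have h1 : Order.height (⟨𝔭, h𝔭prime⟩ : PrimeSpectrum B) ≤ (1 : ℕ) := by
      apply Order.height_le_coe_iff.mpr
      intro p hp
      have hlt : p.asIdeal < 𝔭 := (PrimeSpectrum.asIdeal_lt_asIdeal _ _).mpr hp
      have hbot : p.asIdeal = ⊥ := NoMid p.asIdeal p.2 hlt
      have hmin : IsMin p := by
        intro w hw
        apply (PrimeSpectrum.asIdeal_le_asIdeal _ _).mp
        rw [hbot]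
        exact bot_le
      have : Order.height p = 0 := Order.height_eq_zero.mpr hmin
      rw [this]
      exact_mod_cast zero_lt_one
    simpa using h1
  · rw [ENat.one_le_iff_ne_zero]
    intro h0
    have hmin : IsMin (⟨𝔭, h𝔭prime⟩ : PrimeSpectrum B) := Order.height_eq_zero.mp h0
    have hbotle : (⊥ : PrimeSpectrum B) ≤ ⟨𝔭, h𝔭prime⟩ := bot_le
    have := hmin hbotle
    have h𝔭bot : 𝔭 ≤ (⊥ : PrimeSpectrum B).asIdeal := (PrimeSpectrum.asIdeal_le_asIdeal _ _).mpr this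
    exact h𝔭ne (le_antisymm h𝔭bot bot_le)

-- Full characterization, abstractly
theorem nagata_main {A B L : Type*} [CommRing A] [IsDomain A] [IsIntegrallyClosed A]
    [IsNoetherianRing A] [CommRing B] [CommRing L] [Algebra B L]
    [IsLocalization (nonZeroDivisors B) L]
    (f : B →+* A) (hf : Function.Injective f)
    (hex : ∀ u w : B, (∃ α : A, f u = f w * α) → ∃ t : B, u = w * t) (x : L) :
    x ∈ (algebraMap B L).range ↔
      ∀ (p : Ideal B) (hp : p.IsPrime),
        Order.height (⟨p, hp⟩ : PrimeSpectrum B) = 1 →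
        ∃ b s : B, s ∉ p ∧ x * algebraMap B L s = algebraMap B L b := by
  haveI : IsDomain B := hf.isDomain f
  constructor
  · rintro ⟨d, rfl⟩ p hp _
    exact ⟨d, 1, fun h => hp.ne_top ((Ideal.eq_top_iff_one _).mpr h), by rw [map_one, mul_one]⟩
  · intro H
    obtain ⟨⟨n, d⟩, hx⟩ := IsLocalization.surj (nonZeroDivisors B) x
    have hx' : x * algebraMap B L (d : B) = algebraMap B L n := hx
    by_cases hdvd : ∃ t : B, n = (d : B) * t
    · obtain ⟨t, ht⟩ := hdvd
      refine ⟨t, ?_⟩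
      have hu : IsUnit (algebraMap B L (d : B)) := IsLocalization.map_units _ d
      apply hu.mul_left_cancel
      rw [mul_comm _ x, hx', ht, map_mul]
    · push_neg at hdvd
      have hb : (d : B) ≠ 0 := nonZeroDivisors.ne_zero d.2
      obtain ⟨𝔭, h𝔭, hcond, hht⟩ := nagata_key f hf hex n (d : B) hb hdvd
      obtain ⟨b', s, hs, heq⟩ := H 𝔭 h𝔭 hht
      have hιinj : Function.Injective (algebraMap B L) :=
        IsFractionRing.injective B L
      have hmain : s * n = (d : B) * b' := by
        apply hιinj
        rw [map_mul, map_mul]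
        calc algebraMap B L s * algebraMap B L n
            = algebraMap B L s * (x * algebraMap B L (d : B)) := by rw [hx']
          _ = (x * algebraMap B L s) * algebraMap B L (d : B) := by ring
          _ = algebraMap B L b' * algebraMap B L (d : B) := by rw [heq]
          _ = algebraMap B L (d : B) * algebraMap B L b' := by ring
      exact absurd (hcond s b' hmain) hs

end Key
/-- The subalgebra of invariants `A^G` for a group `G` acting on a `k`-algebra `A` by
`k`-algebra automorphisms. -/
def fixedSubalgebra (G k A : Type*) [CommRing k] [CommRing A] [Algebra k A]
    [Monoid G] [MulSemiringAction G A] [SMulCommClass G k A] : Subalgebra k A where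
  carrier := {a | ∀ g : G, g • a = a}
  mul_mem' := fun {a b} (ha : ∀ g : G, g • a = a) (hb : ∀ g : G, g • b = b) g => by
    rw [smul_mul', ha g, hb g]
  add_mem' := fun {a b} (ha : ∀ g : G, g • a = a) (hb : ∀ g : G, g • b = b) g => by
    rw [smul_add, ha g, hb g]
  algebraMap_mem' := fun c g => by
    rw [Algebra.algebraMap_eq_smul_one, smul_comm, smul_one]

/-- (Nagata) The ring of invariants `B = A^G` of a normal affine domain `A` over a field
`k` is a Krull ring: inside its fraction field, `B` is the intersection of the
localizations `B_p` over all height-one primes `p` of `B`. -/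
theorem stmt_8 (k A G : Type*) [Field k] [CommRing A] [IsDomain A]
    [IsIntegrallyClosed A] [Algebra k A] [Algebra.FiniteType k A]
    [Group G] [MulSemiringAction G A] [SMulCommClass G k A]
    (x : FractionRing ↥(fixedSubalgebra G k A)) :
    x ∈ (algebraMap ↥(fixedSubalgebra G k A)
        (FractionRing ↥(fixedSubalgebra G k A))).range ↔
      ∀ (p : Ideal ↥(fixedSubalgebra G k A)) (hp : p.IsPrime),
        Order.height (⟨p, hp⟩ : PrimeSpectrum ↥(fixedSubalgebra G k A)) = 1 →
        ∃ b s : ↥(fixedSubalgebra G k A), s ∉ p ∧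
          x * algebraMap ↥(fixedSubalgebra G k A)
              (FractionRing ↥(fixedSubalgebra G k A)) s =
            algebraMap ↥(fixedSubalgebra G k A)
              (FractionRing ↥(fixedSubalgebra G k A)) b := by
  let f : ↥(fixedSubalgebra G k A) →+* A := (fixedSubalgebra G k A).val.toRingHom
  have hf : Function.Injective f := Subtype.val_injective
  haveI hN : IsNoetherianRing A := Algebra.FiniteType.isNoetherianRing k A
  have hex : ∀ u w : ↥(fixedSubalgebra G k A),
      (∃ α : A, f u = f w * α) → ∃ t : ↥(fixedSubalgebra G k A), u = w * t := by
    intro u w ⟨α, hα⟩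
    by_cases hw : w = 0
    · refine ⟨0, ?_⟩
      rw [mul_zero]
      apply hf
      rw [map_zero]
      simpa [hw] using hα
    · have hwA : (w : A) ≠ 0 := fun h => hw (Subtype.ext h)
      have hα' : (u : A) = (w : A) * α := hα
      have hαfix : ∀ g : G, g • α = α := by
        intro g
        apply mul_left_cancel₀ hwA
        have hwfix : g • (w : A) = (w : A) := w.2 g
        have hufix : g • (u : A) = (u : A) := u.2 g
        calc (w : A) * (g • α) = (g • (w : A)) * (g • α) := by rw [hwfix]
        _ = g • ((w : A) * α) := by rw [smul_mul']
        _ = g • (u : A) := by rw [← hα']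
        _ = (u : A) := hufix
        _ = (w : A) * α := hα'
      refine ⟨⟨α, hαfix⟩, ?_⟩
      apply Subtype.ext
      exact hα'
  exact nagata_main f hf hex x
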